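/- arXiv:1908.00835 — 2 statements merged into one kernel-verified Lean document; each statement's English description precedes it below -/
import Mathlib

section
/- Let μ : ℕ → ℝ be a sequence of real numbers and let a, b, a', b' : ℕ → ℝ be real sequences satisfying a'₀ = −b₀ − μ₀·a₁, b'₀ = −a₀ − μ₀·b₁, and, for every k ≥ 1, a'_k = μ_{k−1}·a_{k−1} − μ_k·a_{k+1} and b'_k = μ_{k−1}·b_{k−1} − μ_k·b_{k+1}. If μ_k·(a_k·b_{k+1} + a_{k+1}·b_k) → 0 as k → ∞, then the series Σ_{k=0}^∞ (a_k·b'_k + a'_k·b_k) converges and Σ_{k=0}^∞ (a_k·b'_k + a'_k·b_k) = −(a₀² + b₀²). -/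
open Filter Topology

/-- Telescoping sum identity underlying
`Σ_{n odd} (α_{n1} β̇_{n1} + α̇_{n1} β_{n1}) = −(α₁₁² + β₁₁²)` for the
time-dependent Bogoliubov coefficients of the (1+1)-dimensional
dynamical Casimir effect. -/
theorem stmt_1 (μ a b a' b' : ℕ → ℝ)
    (ha0 : a' 0 = -b 0 - μ 0 * a 1)
    (hb0 : b' 0 = -a 0 - μ 0 * b 1)
    (hak : ∀ k, 1 ≤ k → a' k = μ (k - 1) * a (k - 1) - μ k * a (k + 1))
    (hbk : ∀ k, 1 ≤ k → b' k = μ (k - 1) * b (k - 1) - μ k * b (k + 1))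
    (hlim : Tendsto (fun k => μ k * (a k * b (k + 1) + a (k + 1) * b k)) atTop (𝓝 0)) :
    Tendsto (fun n => ∑ k ∈ Finset.range n, (a k * b' k + a' k * b k)) atTop
      (𝓝 (-(a 0 ^ 2 + b 0 ^ 2))) := by
  set c : ℕ → ℝ := fun k => μ k * (a k * b (k + 1) + a (k + 1) * b k) with hc
  have key : ∀ n, ∑ k ∈ Finset.range (n + 1), (a k * b' k + a' k * b k)
      = -(a 0 ^ 2 + b 0 ^ 2) - c n := by
    intro n
    induction n with
    | zero =>
      simp [ha0, hb0, hc]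
      ring
    | succ n ih =>
      rw [Finset.sum_range_succ, ih, hak (n + 1) (by omega), hbk (n + 1) (by omega)]
      simp only [Nat.add_sub_cancel, hc]
      ring
  have h1 : Tendsto (fun n => -(a 0 ^ 2 + b 0 ^ 2) - c n) atTop
      (𝓝 (-(a 0 ^ 2 + b 0 ^ 2))) := by
    have := (tendsto_const_nhds (x := -(a 0 ^ 2 + b 0 ^ 2)) (f := atTop)).sub hlim
    rwa [sub_zero] at this
  have h2 : Tendsto (fun n => ∑ k ∈ Finset.range (n + 1), (a k * b' k + a' k * b k))
      atTop (𝓝 (-(a 0 ^ 2 + b 0 ^ 2))) := by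
    simpa [key] using h1
  exact (tendsto_add_atTop_iff_nat 1).mp h2
end

section
/- For every τ > 0, the function G₁₁(τ) = −(4/(π²κ(τ)²))·(E(κ(τ)) − κ̃(τ)²·K(κ(τ)))·(K(κ(τ)) − E(κ(τ))) is differentiable at τ with derivative G₁₁'(τ) = −(16/(π²κ(τ)⁴))·[(E(κ(τ)) − κ̃(τ)²·K(κ(τ)))² + κ̃(τ)²·(E(κ(τ)) − K(κ(τ)))²]. -/
open Real Filter Topology

/-- Complete elliptic integral of the first kind. -/
noncomputable def ellipticK (k : ℝ) : ℝ :=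
  ∫ α in (0:ℝ)..(Real.pi / 2), 1 / Real.sqrt (1 - k ^ 2 * Real.sin α ^ 2)

/-- Complete elliptic integral of the second kind. -/
noncomputable def ellipticE (k : ℝ) : ℝ :=
  ∫ α in (0:ℝ)..(Real.pi / 2), Real.sqrt (1 - k ^ 2 * Real.sin α ^ 2)

/-- κ(τ) = √(1 − e^{−8τ}). -/
noncomputable def kappa (τ : ℝ) : ℝ := Real.sqrt (1 - Real.exp (-8 * τ))

/-- κ̃(τ) = e^{−4τ}. -/
noncomputable def kappaT (τ : ℝ) : ℝ := Real.exp (-4 * τ)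

/-- Diagonal entry of the reduced covariance matrix of the resonant mode. -/
noncomputable def G₁₁ (τ : ℝ) : ℝ :=
  -(4 / (Real.pi ^ 2 * kappa τ ^ 2)) *
    ((ellipticE (kappa τ) - kappaT τ ^ 2 * ellipticK (kappa τ)) *
      (ellipticK (kappa τ) - ellipticE (kappa τ)))

/-- Off-diagonal entry of the reduced covariance matrix of the resonant mode. -/
noncomputable def G₁₂ (τ : ℝ) : ℝ :=
  (4 / Real.pi ^ 2) * (ellipticE (kappa τ) * ellipticK (kappa τ))

open MeasureTheory Metric intervalIntegral

lemma upos {m : ℝ} (hm : m < 1) (α : ℝ) : 0 < 1 - m * Real.sin α ^ 2 := by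
  have h1 : Real.sin α ^ 2 ≤ 1 := Real.sin_sq_le_one α
  rcases le_or_gt m 0 with h | h
  · have : m * Real.sin α ^ 2 ≤ 0 := mul_nonpos_of_nonpos_of_nonneg h (sq_nonneg _)
    linarith
  · have : m * Real.sin α ^ 2 ≤ m * 1 := mul_le_mul_of_nonneg_left h1 h.le
    linarith

lemma sqrt_ne {m : ℝ} (hm : m < 1) (α : ℝ) : Real.sqrt (1 - m * Real.sin α ^ 2) ≠ 0 :=
  (Real.sqrt_pos.2 (upos hm α)).ne'

-- derivative of the auxiliary antiderivative
lemma hasDerivAt_g {m : ℝ} (h1 : m < 1) (α : ℝ) :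
    HasDerivAt (fun x => (m / (1 - m)) *
        (Real.sin x * Real.cos x * (Real.sqrt (1 - m * Real.sin x ^ 2))⁻¹))
      (Real.sqrt (1 - m * Real.sin α ^ 2) / (1 - m) -
        1 / ((1 - m * Real.sin α ^ 2) * Real.sqrt (1 - m * Real.sin α ^ 2))) α := by
  have hupos := upos h1 α
  have hu : HasDerivAt (fun x : ℝ => 1 - m * Real.sin x ^ 2)
      (-(m * (2 * Real.sin α * Real.cos α))) α := by
    have h := (Real.hasDerivAt_sin α).pow 2
    have := (h.const_mul m).const_sub 1
    refine this.congr_deriv (Eq.symm ?_)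
    push_cast
    ring
  have hsq := hu.sqrt hupos.ne'
  have hinv := hsq.inv (sqrt_ne h1 α)
  have hsc : HasDerivAt (fun x => Real.sin x * Real.cos x)
      (Real.cos α * Real.cos α + Real.sin α * -Real.sin α) α :=
    (Real.hasDerivAt_sin α).mul (Real.hasDerivAt_cos α)
  have hg := (hsc.mul hinv).const_mul (m / (1 - m))
  refine hg.congr_deriv (Eq.symm ?_)
  simp only [Pi.inv_apply]
  set s := Real.sin α
  set c := Real.cos α
  set r := Real.sqrt (1 - m * s ^ 2) with hr
  have hr2 : r ^ 2 = 1 - m * s ^ 2 := Real.sq_sqrt hupos.le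
  have hrne : r ≠ 0 := sqrt_ne h1 α
  have hc2 : c ^ 2 = 1 - s ^ 2 := Real.cos_sq' α
  have hmne : (1 : ℝ) - m ≠ 0 := by linarith
  field_simp
  rw [hr2, hc2]; ring

noncomputable def Fm (m : ℝ) : ℝ :=
  ∫ α in (0:ℝ)..(Real.pi / 2), 1 / Real.sqrt (1 - m * Real.sin α ^ 2)

noncomputable def Em (m : ℝ) : ℝ :=
  ∫ α in (0:ℝ)..(Real.pi / 2), Real.sqrt (1 - m * Real.sin α ^ 2)

lemma cont_u (m : ℝ) : Continuous fun α : ℝ => 1 - m * Real.sin α ^ 2 := by fun_prop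

lemma cont_sqrtu (m : ℝ) : Continuous fun α : ℝ => Real.sqrt (1 - m * Real.sin α ^ 2) :=
  (cont_u m).sqrt

lemma cont_invsqrt {m : ℝ} (hm : m < 1) :
    Continuous fun α : ℝ => 1 / Real.sqrt (1 - m * Real.sin α ^ 2) :=
  continuous_const.div (cont_sqrtu m) (fun α => sqrt_ne hm α)

lemma cont_inv32 {m : ℝ} (hm : m < 1) :
    Continuous fun α : ℝ =>
      1 / ((1 - m * Real.sin α ^ 2) * Real.sqrt (1 - m * Real.sin α ^ 2)) :=
  continuous_const.div ((cont_u m).mul (cont_sqrtu m))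
    (fun α => mul_ne_zero (upos hm α).ne' (sqrt_ne hm α))

lemma int_inv32 {m : ℝ} (h1 : m < 1) :
    ∫ α in (0:ℝ)..(Real.pi / 2),
      1 / ((1 - m * Real.sin α ^ 2) * Real.sqrt (1 - m * Real.sin α ^ 2))
      = Em m / (1 - m) := by
  have hcont : Continuous fun α : ℝ =>
      Real.sqrt (1 - m * Real.sin α ^ 2) / (1 - m) -
        1 / ((1 - m * Real.sin α ^ 2) * Real.sqrt (1 - m * Real.sin α ^ 2)) :=
    ((cont_sqrtu m).div_const _).sub (cont_inv32 h1)
  have hftc := intervalIntegral.integral_eq_sub_of_hasDerivAt (a := (0:ℝ)) (b := Real.pi/2)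
    (f := fun x => (m / (1 - m)) *
        (Real.sin x * Real.cos x * (Real.sqrt (1 - m * Real.sin x ^ 2))⁻¹))
    (fun α _ => hasDerivAt_g h1 α) (hcont.intervalIntegrable _ _)
  rw [intervalIntegral.integral_sub (((cont_sqrtu m).div_const _).intervalIntegrable _ _)
      ((cont_inv32 h1).intervalIntegrable _ _)] at hftc
  rw [intervalIntegral.integral_div] at hftc
  simp [Real.cos_pi_div_two, Real.sin_zero] at hftc
  rw [← Em] at hftc
  rw [show (fun α : ℝ => 1 / ((1 - m * Real.sin α ^ 2) * Real.sqrt (1 - m * Real.sin α ^ 2)))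
      = fun α : ℝ => (Real.sqrt (1 - m * Real.sin α ^ 2))⁻¹ * (1 - m * Real.sin α ^ 2)⁻¹ from
    funext fun α => by rw [one_div, mul_inv, mul_comm]]
  linarith

lemma ball_lt {m x : ℝ} (h1 : m < 1) (hx : x ∈ ball m ((1 - m) / 2)) : x < (1 + m) / 2 := by
  have := abs_lt.1 (mem_ball_iff_norm.1 hx)
  have h := this.2
  linarith [this.1, this.2]

lemma xs_le {x m₁ : ℝ} (hx : x ≤ m₁) (hm₁ : 0 ≤ m₁) (α : ℝ) :
    x * Real.sin α ^ 2 ≤ m₁ := by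
  rcases le_or_gt x 0 with h | h
  · exact le_trans (mul_nonpos_of_nonpos_of_nonneg h (sq_nonneg _)) hm₁
  · calc x * Real.sin α ^ 2 ≤ x * 1 := mul_le_mul_of_nonneg_left (Real.sin_sq_le_one α) h.le
    _ = x := mul_one x
    _ ≤ m₁ := hx

lemma hasDerivAt_Em {m : ℝ} (h0 : 0 < m) (h1 : m < 1) :
    HasDerivAt Em (-((Fm m - Em m) / (2 * m))) m := by
  set m₁ : ℝ := (1 + m) / 2 with hm₁def
  have hm₁1 : m₁ < 1 := by rw [hm₁def]; linarith
  have hm₁0 : 0 < m₁ := by rw [hm₁def]; linarith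
  have hε : (0:ℝ) < (1 - m) / 2 := by linarith
  have key := (intervalIntegral.hasDerivAt_integral_of_dominated_loc_of_deriv_le
      (𝕜 := ℝ) (μ := volume) (a := (0:ℝ)) (b := Real.pi / 2)
      (F := fun x α => Real.sqrt (1 - x * Real.sin α ^ 2))
      (F' := fun x α => -(Real.sin α ^ 2 / (2 * Real.sqrt (1 - x * Real.sin α ^ 2))))
      (bound := fun _ => 1 / (2 * Real.sqrt (1 - m₁)))
      (ball_mem_nhds m hε)
      (Eventually.of_forall fun x => (cont_sqrtu x).aestronglyMeasurable)
      ((cont_sqrtu m).intervalIntegrable _ _)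
      ?_ ?_ (intervalIntegrable_const) ?_).2
  · -- rewrite the integral of the derivative
    have hint : (∫ α in (0:ℝ)..(Real.pi / 2),
        -(Real.sin α ^ 2 / (2 * Real.sqrt (1 - m * Real.sin α ^ 2))))
        = -((Fm m - Em m) / (2 * m)) := by
      have hcongr : ∀ α ∈ Set.uIcc (0:ℝ) (Real.pi / 2),
          -(Real.sin α ^ 2 / (2 * Real.sqrt (1 - m * Real.sin α ^ 2)))
          = (-(1 / (2 * m))) * (1 / Real.sqrt (1 - m * Real.sin α ^ 2)
              - Real.sqrt (1 - m * Real.sin α ^ 2)) := by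
        intro α _
        have hu := upos h1 α
        have hrne := sqrt_ne h1 α
        have hr2 : Real.sqrt (1 - m * Real.sin α ^ 2) * Real.sqrt (1 - m * Real.sin α ^ 2)
            = 1 - m * Real.sin α ^ 2 := Real.mul_self_sqrt hu.le
        field_simp
        rw [Real.sq_sqrt (by linarith)]; ring
      rw [intervalIntegral.integral_congr hcongr, intervalIntegral.integral_const_mul,
        intervalIntegral.integral_sub ((cont_invsqrt h1).intervalIntegrable _ _)
          ((cont_sqrtu m).intervalIntegrable _ _)]
      rw [← Fm, ← Em]
      ring
    rw [hint] at key
    exact key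
  · exact (((Real.continuous_sin.pow 2).div (continuous_const.mul (cont_sqrtu m))
      (fun α => mul_ne_zero two_ne_zero (sqrt_ne h1 α))).neg).aestronglyMeasurable
  · -- bound
    refine Eventually.of_forall fun α _ x hx => ?_
    have hxm₁ : x < m₁ := ball_lt h1 hx
    have hxs : x * Real.sin α ^ 2 ≤ m₁ := xs_le hxm₁.le hm₁0.le α
    have hpos : (0:ℝ) < 1 - m₁ := by linarith
    have h2 : Real.sqrt (1 - m₁) ≤ Real.sqrt (1 - x * Real.sin α ^ 2) :=
      Real.sqrt_le_sqrt (by linarith)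
    have h3 : (0:ℝ) < 2 * Real.sqrt (1 - m₁) := by positivity
    rw [Real.norm_eq_abs, abs_neg, abs_of_nonneg (by positivity)]
    exact div_le_div₀ (by norm_num) (Real.sin_sq_le_one α) h3 (by linarith)
  · -- differentiability
    refine Eventually.of_forall fun α _ x hx => ?_
    have hxm₁ : x < m₁ := ball_lt h1 hx
    have hux : 0 < 1 - x * Real.sin α ^ 2 := upos (lt_trans hxm₁ hm₁1) α
    have hlin : HasDerivAt (fun y : ℝ => 1 - y * Real.sin α ^ 2) (-(Real.sin α ^ 2)) x := by
      simpa using ((hasDerivAt_id x).mul_const (Real.sin α ^ 2)).const_sub 1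
    have := hlin.sqrt hux.ne'
    refine this.congr_deriv (Eq.symm ?_)
    rw [neg_div]

lemma hasDerivAt_Fm {m : ℝ} (h0 : 0 < m) (h1 : m < 1) :
    HasDerivAt Fm ((Em m / (1 - m) - Fm m) / (2 * m)) m := by
  set m₁ : ℝ := (1 + m) / 2 with hm₁def
  have hm₁1 : m₁ < 1 := by rw [hm₁def]; linarith
  have hm₁0 : 0 < m₁ := by rw [hm₁def]; linarith
  have hε : (0:ℝ) < (1 - m) / 2 := by linarith
  have hmea : ∀ x : ℝ, x < 1 → AEStronglyMeasurable
      (fun α : ℝ => 1 / Real.sqrt (1 - x * Real.sin α ^ 2))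
      (volume.restrict (Set.uIoc (0:ℝ) (Real.pi / 2))) :=
    fun x hx => (cont_invsqrt hx).aestronglyMeasurable
  have key := (intervalIntegral.hasDerivAt_integral_of_dominated_loc_of_deriv_le
      (𝕜 := ℝ) (μ := volume) (a := (0:ℝ)) (b := Real.pi / 2)
      (F := fun x α => 1 / Real.sqrt (1 - x * Real.sin α ^ 2))
      (F' := fun x α => Real.sin α ^ 2 /
        (2 * ((1 - x * Real.sin α ^ 2) * Real.sqrt (1 - x * Real.sin α ^ 2))))
      (bound := fun _ => 1 / (2 * ((1 - m₁) * Real.sqrt (1 - m₁))))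
      (ball_mem_nhds m hε)
      ?_
      ((cont_invsqrt h1).intervalIntegrable _ _)
      ?_ ?_ (intervalIntegrable_const) ?_).2
  · -- rewrite the integral of the derivative
    have hint : (∫ α in (0:ℝ)..(Real.pi / 2), Real.sin α ^ 2 /
        (2 * ((1 - m * Real.sin α ^ 2) * Real.sqrt (1 - m * Real.sin α ^ 2))))
        = (Em m / (1 - m) - Fm m) / (2 * m) := by
      have hcongr : ∀ α ∈ Set.uIcc (0:ℝ) (Real.pi / 2),
          Real.sin α ^ 2 /
            (2 * ((1 - m * Real.sin α ^ 2) * Real.sqrt (1 - m * Real.sin α ^ 2)))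
          = (1 / (2 * m)) * (1 / ((1 - m * Real.sin α ^ 2) * Real.sqrt (1 - m * Real.sin α ^ 2))
              - 1 / Real.sqrt (1 - m * Real.sin α ^ 2)) := by
        intro α _
        have hu := upos h1 α
        have hrne := sqrt_ne h1 α
        have hr2 : Real.sqrt (1 - m * Real.sin α ^ 2) * Real.sqrt (1 - m * Real.sin α ^ 2)
            = 1 - m * Real.sin α ^ 2 := Real.mul_self_sqrt hu.le
        field_simp
        have hu' : 1 - Real.sin α ^ 2 * m ≠ 0 := by linarith
        field_simp
        ring
      rw [intervalIntegral.integral_congr hcongr, intervalIntegral.integral_const_mul,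
        intervalIntegral.integral_sub ((cont_inv32 h1).intervalIntegrable _ _)
          ((cont_invsqrt h1).intervalIntegrable _ _)]
      rw [int_inv32 h1, ← Fm]
      ring
    rw [hint] at key
    exact key
  · -- eventual measurability of F x
    exact Filter.eventually_of_mem (Iio_mem_nhds h1) fun x hx => hmea x hx
  · exact ((Real.continuous_sin.pow 2).div
      (continuous_const.mul ((cont_u m).mul (cont_sqrtu m)))
      (fun α => mul_ne_zero two_ne_zero
        (mul_ne_zero (upos h1 α).ne' (sqrt_ne h1 α)))).aestronglyMeasurable
  · -- bound
    refine Eventually.of_forall fun α _ x hx => ?_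
    have hxm₁ : x < m₁ := ball_lt h1 hx
    have hxs : x * Real.sin α ^ 2 ≤ m₁ := xs_le hxm₁.le hm₁0.le α
    have hpos : (0:ℝ) < 1 - m₁ := by linarith
    have h2 : Real.sqrt (1 - m₁) ≤ Real.sqrt (1 - x * Real.sin α ^ 2) :=
      Real.sqrt_le_sqrt (by linarith)
    have hsq : (0:ℝ) < Real.sqrt (1 - m₁) := Real.sqrt_pos.2 hpos
    have h4 : (1 - m₁) * Real.sqrt (1 - m₁) ≤
        (1 - x * Real.sin α ^ 2) * Real.sqrt (1 - x * Real.sin α ^ 2) :=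
      mul_le_mul (by linarith) h2 hsq.le (by linarith)
    have hx1 : x < 1 := lt_trans hxm₁ hm₁1
    have hux : 0 < 1 - x * Real.sin α ^ 2 := upos hx1 α
    rw [Real.norm_eq_abs, abs_of_nonneg (div_nonneg (sq_nonneg _)
      (mul_pos two_pos (mul_pos hux (Real.sqrt_pos.2 hux))).le)]
    exact div_le_div₀ (by norm_num) (Real.sin_sq_le_one α)
      (mul_pos two_pos (mul_pos hpos hsq)) (by linarith)
  · -- differentiability
    refine Eventually.of_forall fun α _ x hx => ?_
    have hxm₁ : x < m₁ := ball_lt h1 hx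
    have hx1 : x < 1 := lt_trans hxm₁ hm₁1
    have hux : 0 < 1 - x * Real.sin α ^ 2 := upos hx1 α
    have hlin : HasDerivAt (fun y : ℝ => 1 - y * Real.sin α ^ 2) (-(Real.sin α ^ 2)) x := by
      simpa using ((hasDerivAt_id x).mul_const (Real.sin α ^ 2)).const_sub 1
    have hsq := hlin.sqrt hux.ne'
    have hinv := hsq.inv (sqrt_ne hx1 α)
    have heq : (fun y : ℝ => 1 / Real.sqrt (1 - y * Real.sin α ^ 2))
        = fun y : ℝ => (Real.sqrt (1 - y * Real.sin α ^ 2))⁻¹ := by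
      funext y; rw [one_div]
    rw [heq]
    refine hinv.congr_deriv (Eq.symm ?_)
    have hr2 : Real.sqrt (1 - x * Real.sin α ^ 2) ^ 2 = 1 - x * Real.sin α ^ 2 :=
      Real.sq_sqrt hux.le
    beta_reduce
    have hrne := sqrt_ne hx1 α
    rw [hr2]
    field_simp

lemma kappa_sq {t : ℝ} (ht : 0 ≤ t) : kappa t ^ 2 = 1 - Real.exp (-8 * t) := by
  rw [kappa, Real.sq_sqrt]
  have : Real.exp (-8 * t) ≤ 1 := Real.exp_le_one_iff.2 (by nlinarith)
  linarith

lemma kappaT_sq (t : ℝ) : kappaT t ^ 2 = Real.exp (-8 * t) := by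
  rw [kappaT, sq, ← Real.exp_add]; ring_nf

lemma ellipticK_eq {t : ℝ} (ht : 0 ≤ t) :
    ellipticK (kappa t) = Fm (1 - Real.exp (-8 * t)) := by
  simp only [ellipticK, Fm, kappa_sq ht]

lemma ellipticE_eq {t : ℝ} (ht : 0 ≤ t) :
    ellipticE (kappa t) = Em (1 - Real.exp (-8 * t)) := by
  simp only [ellipticE, Em, kappa_sq ht]

/-- For every τ > 0, G₁₁ is differentiable at τ with the stated derivative. -/
theorem stmt_2 (τ : ℝ) (hτ : 0 < τ) :
    HasDerivAt G₁₁
      (-(16 / (Real.pi ^ 2 * kappa τ ^ 4)) *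
        ((ellipticE (kappa τ) - kappaT τ ^ 2 * ellipticK (kappa τ)) ^ 2 +
          kappaT τ ^ 2 * (ellipticE (kappa τ) - ellipticK (kappa τ)) ^ 2)) τ := by
  have hexp1 : Real.exp (-8 * τ) < 1 := Real.exp_lt_one_iff.2 (by nlinarith)
  have hexp0 : 0 < Real.exp (-8 * τ) := Real.exp_pos _
  set m : ℝ := 1 - Real.exp (-8 * τ) with hmdef
  have h0 : 0 < m := by rw [hmdef]; linarith
  have h1 : m < 1 := by rw [hmdef]; linarith
  have hm1 : (1:ℝ) - m = Real.exp (-8 * τ) := by rw [hmdef]; ring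
  have hEm := hasDerivAt_Em h0 h1
  have hFm := hasDerivAt_Fm h0 h1
  set E' : ℝ := -((Fm m - Em m) / (2 * m)) with hE'def
  set F' : ℝ := (Em m / (1 - m) - Fm m) / (2 * m) with hF'def
  -- derivative of inner function
  have hm' : HasDerivAt (fun t : ℝ => 1 - Real.exp (-8 * t)) (8 * Real.exp (-8 * τ)) τ := by
    have hlin : HasDerivAt (fun t : ℝ => -8 * t) (-8 : ℝ) τ := by
      simpa using (hasDerivAt_id τ).const_mul (-8 : ℝ)
    have h2 := (Real.hasDerivAt_exp (-8 * τ)).comp τ hlin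
    have h3 := h2.const_sub 1
    refine h3.congr_deriv (Eq.symm ?_)
    ring
  -- derivative of H
  have hA : HasDerivAt (fun x => Em x - (1 - x) * Fm x)
      (E' - ((-1) * Fm m + (1 - m) * F')) m :=
    hEm.sub (((hasDerivAt_id m).const_sub 1).mul hFm)
  have hB : HasDerivAt (fun x => Fm x - Em x) (F' - E') m := hFm.sub hEm
  have hAB := hA.mul hB
  have hdiv := hAB.div (hasDerivAt_id m) h0.ne'
  have hH := hdiv.const_mul (-(4 / Real.pi ^ 2))
  have hcomp := hH.comp τ hm'
  have heq : G₁₁ =ᶠ[𝓝 τ]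
      (fun t => -(4 / Real.pi ^ 2) *
        ((Em (1 - Real.exp (-8 * t)) - (1 - (1 - Real.exp (-8 * t))) * Fm (1 - Real.exp (-8 * t))) *
          (Fm (1 - Real.exp (-8 * t)) - Em (1 - Real.exp (-8 * t))) / (1 - Real.exp (-8 * t)))) := by
    filter_upwards [eventually_gt_nhds hτ] with t ht
    rw [G₁₁, ellipticK_eq ht.le, ellipticE_eq ht.le, kappaT_sq t, kappa_sq ht.le]
    have he1 : Real.exp (-8 * t) < 1 := Real.exp_lt_one_iff.2 (by nlinarith)
    have hne : (1:ℝ) - Real.exp (-8 * t) ≠ 0 := by linarith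
    field_simp
    ring
  have final := hcomp.congr_of_eventuallyEq heq
  refine final.congr_deriv (Eq.symm ?_)
  simp only [Pi.mul_apply, id]
  rw [ellipticK_eq hτ.le, ellipticE_eq hτ.le, kappaT_sq τ,
    show kappa τ ^ 4 = (kappa τ ^ 2) ^ 2 by ring, kappa_sq hτ.le]
  rw [← hmdef, ← hm1, hE'def, hF'def]
  have hπ : Real.pi ≠ 0 := Real.pi_ne_zero
  have hm1ne : (1:ℝ) - m ≠ 0 := by linarith
  field_simp
  ring
end
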